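/- Let B, B_+, B_- be sets of integer-valued functions on Ω with B_+, B_- ⊆ B disjoint, and suppose there exist i_0 ∈ Ω and an integer t such that f(i_0) > t for all f ∈ B_+ and g(i_0) < t for all g ∈ B_-. Then s(B) ≥ s(B_+) + s(B_-), where s(C) denotes the number of centers shattered by C. -/

import Mathlib

variable {Ω : Type*}

/-- `C` shatters the center `(σ, h)`. (For `σ = ∅` this is the trivial center,
shattered iff `C` is nonempty.) -/
def ShattersCenter (C : Set (Ω → ℤ)) (σ : Finset Ω) (h : Ω → ℤ) : Prop :=
  C.Nonempty ∧ ∀ θ : Ω → Bool, ∃ f ∈ C, ∀ i ∈ σ,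
    (θ i = true → f i > h i) ∧ (θ i = false → f i < h i)

/-- The set of centers shattered by `C`, level functions being supported on `σ`. -/
def shatteredCenters (C : Set (Ω → ℤ)) : Set (Finset Ω × (Ω → ℤ)) :=
  {p | (∀ i ∉ p.1, p.2 i = 0) ∧ ShattersCenter C p.1 p.2}

theorem stmt_10 (B Bp Bm : Set (Ω → ℤ))
    (hp : Bp ⊆ B) (hm : Bm ⊆ B) (hdisj : Disjoint Bp Bm)
    (i₀ : Ω) (t : ℤ)
    (hsep : (∀ f ∈ Bp, f i₀ > t) ∧ ∀ g ∈ Bm, g i₀ < t)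
    (hfin : (shatteredCenters B).Finite) :
    (shatteredCenters B).encard ≥
      (shatteredCenters Bp).encard + (shatteredCenters Bm).encard := by
  classical
  obtain ⟨hsp, hsm⟩ := hsep
  set S := shatteredCenters B with hS
  set Sp := shatteredCenters Bp with hSp
  set Sm := shatteredCenters Bm with hSm
  -- monotonicity
  have mono : ∀ (C D : Set (Ω → ℤ)), C ⊆ D →
      shatteredCenters C ⊆ shatteredCenters D := by
    rintro C D hCD p ⟨hsupp, ⟨hne, hsh⟩⟩
    exact ⟨hsupp, hne.mono hCD, fun θ => by
      obtain ⟨f, hf, hfθ⟩ := hsh θ; exact ⟨f, hCD hf, hfθ⟩⟩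
  have hpS : Sp ⊆ S := mono _ _ hp
  have hmS : Sm ⊆ S := mono _ _ hm
  -- the doubling map
  set D : Finset Ω × (Ω → ℤ) → Finset Ω × (Ω → ℤ) :=
    fun p => (insert i₀ p.1, Function.update p.2 i₀ t) with hD
  -- centers shattered by both don't contain i₀
  have hnotmem : ∀ p ∈ Sp ∩ Sm, i₀ ∉ p.1 := by
    rintro ⟨σ, h⟩ ⟨⟨_, _, hshp⟩, ⟨_, _, hshm⟩⟩ hi
    obtain ⟨f, hf, hfθ⟩ := hshp (fun _ => false)
    obtain ⟨g, hg, hgθ⟩ := hshm (fun _ => true)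
    have h1 := (hfθ i₀ hi).2 rfl
    have h2 := (hgθ i₀ hi).1 rfl
    have h3 := hsp f hf
    have h4 := hsm g hg
    simp only at h1 h2
    omega
  -- image lands in S
  have himg : D '' (Sp ∩ Sm) ⊆ S := by
    rintro _ ⟨⟨σ, h⟩, hmem, rfl⟩
    have hi := hnotmem _ hmem
    obtain ⟨⟨hsupp, hnep, hshp⟩, ⟨_, _, hshm⟩⟩ := hmem
    refine ⟨?_, hnep.mono hp, fun θ => ?_⟩
    · intro i hi'
      simp only [hD, Finset.mem_insert, not_or] at hi' ⊢
      rw [Function.update_of_ne hi'.1]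
      exact hsupp i hi'.2
    · rcases hθ : θ i₀ with _ | _
      · obtain ⟨g, hg, hgθ⟩ := hshm θ
        refine ⟨g, hm hg, fun i hi' => ?_⟩
        simp only [hD, Finset.mem_insert] at hi'
        rcases hi' with rfl | hi'
        · simp [hD, hθ, hsm g hg]
        · have : i ≠ i₀ := fun e => hi (e ▸ hi')
          simpa [hD, Function.update_of_ne this] using hgθ i hi'
      · obtain ⟨f, hf, hfθ⟩ := hshp θ
        refine ⟨f, hp hf, fun i hi' => ?_⟩
        simp only [hD, Finset.mem_insert] at hi'
        rcases hi' with rfl | hi'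
        · simp [hD, hθ, hsp f hf]
        · have : i ≠ i₀ := fun e => hi (e ▸ hi')
          simpa [hD, Function.update_of_ne this] using hfθ i hi'
  -- injectivity
  have hinj : Set.InjOn D (Sp ∩ Sm) := by
    rintro ⟨σ₁, h₁⟩ hm1 ⟨σ₂, h₂⟩ hm2 heq
    have hi1 := hnotmem _ hm1
    have hi2 := hnotmem _ hm2
    have h01 : h₁ i₀ = 0 := hm1.1.1 i₀ hi1
    have h02 : h₂ i₀ = 0 := hm2.1.1 i₀ hi2
    simp only [hD, Prod.mk.injEq] at heq
    obtain ⟨hσ, hh⟩ := heq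
    have hσ' : σ₁ = σ₂ := by
      have := congrArg (Finset.erase · i₀) hσ
      simpa [Finset.erase_insert hi1, Finset.erase_insert hi2] using this
    have hh' : h₁ = h₂ := by
      funext i
      by_cases hiq : i = i₀
      · subst hiq; rw [h01, h02]
      · have := congrFun hh i
        rwa [Function.update_of_ne hiq, Function.update_of_ne hiq] at this
    simp [hσ', hh']
  -- image disjoint from Sp ∪ Sm
  have hdisj2 : Disjoint (Sp ∪ Sm) (D '' (Sp ∩ Sm)) := by
    rw [Set.disjoint_right]
    rintro _ ⟨⟨σ, h⟩, hmem, rfl⟩ hq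
    have hi₀ : i₀ ∈ insert i₀ σ := Finset.mem_insert_self _ _
    have hval : Function.update h i₀ t i₀ = t := Function.update_self _ _ _
    rcases hq with hq | hq
    · obtain ⟨_, _, hsh⟩ := hq
      obtain ⟨f, hf, hfθ⟩ := hsh (fun _ => false)
      have := (hfθ i₀ hi₀).2 rfl
      simp only [hD, Function.update_self] at this
      exact absurd (hsp f hf) (by omega)
    · obtain ⟨_, _, hsh⟩ := hq
      obtain ⟨g, hg, hgθ⟩ := hsh (fun _ => true)
      have := (hgθ i₀ hi₀).1 rfl
      simp only [hD, Function.update_self] at this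
      exact absurd (hsm g hg) (by omega)
  calc Sp.encard + Sm.encard
      = (Sp ∪ Sm).encard + (Sp ∩ Sm).encard :=
        (Set.encard_union_add_encard_inter Sp Sm).symm
    _ = (Sp ∪ Sm).encard + (D '' (Sp ∩ Sm)).encard := by rw [hinj.encard_image]
    _ = ((Sp ∪ Sm) ∪ D '' (Sp ∩ Sm)).encard := (Set.encard_union_eq hdisj2).symm
    _ ≤ S.encard := Set.encard_mono (Set.union_subset (Set.union_subset hpS hmS) himg)
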